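/- Let A ∈ M_2(o_m) with cyclic reduction Ā mod π, over a complete DVR o with residue field F_q. Then |C_{GL_2(o_m)}(A)| = (q²−1)q^{2m−2} if Ā is irreducible over F_q, (q−1)²q^{2m−2} if Ā is split semisimple (two distinct eigenvalues in F_q), and (q²−q)q^{2m−2} if Ā is split non-semisimple (a single repeated eigenvalue but Ā not scalar). -/

import Mathlib

open Function

section Aux

/-- Preimage of a set under a surjective additive hom is equivalent to the set times the
fiber of `0`. -/
noncomputable def preimageEquiv {G H : Type*} [AddCommGroup G] [AddCommGroup H] (f : G →+ H)
    (hf : Function.Surjective f) (T : Set H) :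
    (f ⁻¹' T : Set G) ≃ T × (f ⁻¹' {0} : Set G) where
  toFun y := (⟨f y, y.2⟩, ⟨(y : G) - surjInv hf (f y), by
    simp [Set.mem_preimage, surjInv_eq hf]⟩)
  invFun x := ⟨surjInv hf x.1 + x.2, by
    have h2 : f x.2 = 0 := x.2.2
    simp [Set.mem_preimage, surjInv_eq hf, h2, x.1.2]⟩
  left_inv y := by
    ext
    show surjInv hf (f ↑y) + (↑y - surjInv hf (f ↑y)) = ↑y
    rw [add_comm, sub_add_cancel]
  right_inv x := by
    have h2 : f (x.2 : G) = 0 := x.2.2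
    ext
    · show f (surjInv hf ↑x.1 + ↑x.2) = ↑x.1
      simp [surjInv_eq hf, h2]
    · show surjInv hf ↑x.1 + ↑x.2 - surjInv hf (f (surjInv hf ↑x.1 + ↑x.2)) = ↑x.2
      simp only [map_add, surjInv_eq hf, h2, add_zero]
      rw [add_sub_cancel_left]

theorem card_preimage {G H : Type*} [AddCommGroup G] [AddCommGroup H] (f : G →+ H)
    (hf : Function.Surjective f) (T : Set H) :
    Nat.card (f ⁻¹' T : Set G) = Nat.card T * Nat.card (f ⁻¹' {0} : Set G) := by
  rw [Nat.card_congr (preimageEquiv f hf T), Nat.card_prod]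

theorem kerEquiv {O : Type*} [CommRing O] [IsDomain O] (c d : O) (hc : c ≠ 0)
    (I J : Ideal O) (hI : I = Ideal.span {c * d}) (hJ : J = Ideal.span {c}) (hle : I ≤ J) :
    Nonempty ((O ⧸ Ideal.span {d}) ≃
      ((Ideal.Quotient.factor hle) ⁻¹' {0} : Set (O ⧸ I))) := by
  subst hI hJ
  set I := Ideal.span {c * d}
  set μ : O →ₗ[O] O ⧸ I := c • I.mkQ with hμ
  have hker : Ideal.span {d} ≤ LinearMap.ker μ := by
    rw [Ideal.span_le, Set.singleton_subset_iff]
    show μ d = 0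
    have : μ d = Ideal.Quotient.mk I (c * d) := rfl
    rw [this, Ideal.Quotient.eq_zero_iff_mem]
    exact Ideal.subset_span rfl
  set ψ := Submodule.liftQ (Ideal.span {d}) μ hker with hψ
  have hψmk : ∀ u : O, ψ (Ideal.Quotient.mk _ u) = Ideal.Quotient.mk I (c * u) := fun u => rfl
  have hmem : ∀ x, ψ x ∈ ((Ideal.Quotient.factor hle) ⁻¹' {0} : Set (O ⧸ I)) := by
    intro x
    obtain ⟨u, rfl⟩ := Ideal.Quotient.mk_surjective x
    rw [Set.mem_preimage, hψmk, Ideal.Quotient.factor_mk, Set.mem_singleton_iff,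
      Ideal.Quotient.eq_zero_iff_mem, Ideal.mem_span_singleton]
    exact ⟨u, rfl⟩
  refine ⟨Equiv.ofBijective (Set.codRestrict ψ _ hmem) ⟨?_, ?_⟩⟩
  · intro x y h
    obtain ⟨u, rfl⟩ := Ideal.Quotient.mk_surjective x
    obtain ⟨v, rfl⟩ := Ideal.Quotient.mk_surjective y
    have h' : Ideal.Quotient.mk I (c * u) = Ideal.Quotient.mk I (c * v) := by
      have := congrArg Subtype.val h
      simpa [Set.codRestrict, hψmk] using this
    rw [Ideal.Quotient.eq, ← mul_sub, Ideal.mem_span_singleton] at h'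
    obtain ⟨t, ht⟩ := h'
    rw [mul_assoc] at ht
    have : u - v = d * t := mul_left_cancel₀ hc ht
    rw [Ideal.Quotient.eq, this, Ideal.mem_span_singleton]
    exact ⟨t, rfl⟩
  · rintro ⟨y, hy⟩
    obtain ⟨z, rfl⟩ := Ideal.Quotient.mk_surjective y
    rw [Set.mem_preimage, Ideal.Quotient.factor_mk, Set.mem_singleton_iff,
      Ideal.Quotient.eq_zero_iff_mem, Ideal.mem_span_singleton] at hy
    obtain ⟨u, rfl⟩ := hy
    exact ⟨Ideal.Quotient.mk _ u, Subtype.ext (hψmk u)⟩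

theorem quot_card {O : Type*} [CommRing O] [IsDomain O] (π : O) (hπ : Irreducible π) :
    ∀ j : ℕ, Nat.card (O ⧸ Ideal.span {π ^ j}) = Nat.card (O ⧸ Ideal.span {π}) ^ j := by
  intro j
  induction j with
  | zero =>
    rw [pow_zero, pow_zero]
    have h1 : (Ideal.span {(1 : O)}) = ⊤ := Ideal.span_singleton_one
    have hsub : Subsingleton (O ⧸ Ideal.span {(1 : O)}) := by
      rw [h1]
      exact Ideal.Quotient.subsingleton_iff.mpr rfl
    exact Nat.card_eq_one_iff_unique.mpr ⟨hsub, ⟨0⟩⟩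
  | succ j ih =>
    have hle' : Ideal.span {π ^ (j + 1)} ≤ Ideal.span {π ^ j} :=
      Ideal.span_singleton_le_span_singleton.mpr ⟨π, pow_succ π j⟩
    set F := Ideal.Quotient.factor hle' with hF
    have hsurj : Function.Surjective F := by
      intro y
      obtain ⟨x, rfl⟩ := Ideal.Quotient.mk_surjective y
      exact ⟨Ideal.Quotient.mk _ x, Ideal.Quotient.factor_mk hle' x⟩
    have hcoe : ⇑F.toAddMonoidHom = ⇑F := rfl
    have hcard := card_preimage F.toAddMonoidHom (by rw [hcoe]; exact hsurj) Set.univ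
    rw [hcoe, Set.preimage_univ, Nat.card_univ, Nat.card_univ] at hcard
    obtain ⟨e⟩ := kerEquiv (π ^ j) π (pow_ne_zero j hπ.ne_zero) _ _ (by rw [pow_succ]) rfl hle'
    rw [hcard, ← Nat.card_congr e, ih, pow_succ]

open Polynomial in
theorem charpoly_fin_two' {K : Type*} [CommRing K] (M : Matrix (Fin 2) (Fin 2) K) :
    M.charpoly = X ^ 2 - C (M 0 0 + M 1 1) * X + C (M 0 0 * M 1 1 - M 0 1 * M 1 0) := by
  rw [Matrix.charpoly, Matrix.det_fin_two, Matrix.charmatrix_apply_eq, Matrix.charmatrix_apply_eq,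
    Matrix.charmatrix_apply_ne _ _ _ (by decide), Matrix.charmatrix_apply_ne _ _ _ (by decide)]
  simp only [C_add, C_mul, C_sub]
  ring

theorem det_smul_one_add_smul {S : Type*} [CommRing S] (M : Matrix (Fin 2) (Fin 2) S) (a b : S) :
    (a • (1 : Matrix (Fin 2) (Fin 2) S) + b • M).det =
      a * a + (M 0 0 + M 1 1) * (a * b) + (M 0 0 * M 1 1 - M 0 1 * M 1 0) * (b * b) := by
  rw [Matrix.det_fin_two]
  simp only [Matrix.add_apply, Matrix.smul_apply, Matrix.one_apply, smul_eq_mul]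
  norm_num
  ring

open Polynomial in
theorem no_root_of_irred {K : Type*} [Field K] (p : Polynomial K) (hd : p.natDegree = 2)
    (hp : Irreducible p) (r : K) : ¬ p.IsRoot r := by
  intro hr
  obtain ⟨c, hc⟩ := (dvd_iff_isRoot).mpr hr
  rcases hp.isUnit_or_isUnit hc with h | h
  · exact Polynomial.not_isUnit_X_sub_C r h
  · have hc0 : c ≠ 0 := fun h0 => by
      simp [h0] at hc
      rw [hc] at hd
      simp at hd
    have : p.natDegree = (X - C r).natDegree + c.natDegree := by
      rw [hc, Polynomial.natDegree_mul (X_sub_C_ne_zero r) hc0]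
    rw [hd, natDegree_X_sub_C, Polynomial.natDegree_eq_zero_of_isUnit h] at this
    omega

theorem card_line {K : Type*} [Field K] (c : K) :
    Nat.card {p : K × K | p.1 + c * p.2 = 0} = Nat.card K := by
  symm
  apply Nat.card_congr
  refine Equiv.ofBijective (fun y => ⟨(-(c * y), y), by simp⟩) ⟨?_, ?_⟩
  · intro y z h
    exact congrArg (Prod.snd ∘ Subtype.val) h
  · rintro ⟨⟨x, y⟩, hxy⟩
    refine ⟨y, Subtype.ext ?_⟩
    have : x = -(c * y) := by
      have := hxy
      simp only [Set.mem_setOf_eq] at this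
      linear_combination this
    simp [this]

theorem arith_case (q cT z : ℕ) (h2 : 2 ≤ q) (h : cT + z = q * q) :
    cT = q * q - z := by omega

end Aux

/-- A 2×2 matrix `A` over a commutative ring is *cyclic* if there is a vector `v`
such that `{v, A.mulVec v}` is a basis of the free module `R²`. -/
def Mat2Cyclic {R : Type*} [CommRing R] (A : Matrix (Fin 2) (Fin 2) R) : Prop :=
  ∃ (v : Fin 2 → R) (b : Module.Basis (Fin 2) R (Fin 2 → R)), b 0 = v ∧ b 1 = A.mulVec v

theorem centralizer_equiv {S K : Type*} [CommRing S] [Field K] (f : S →+* K)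
    (hsurj : Function.Surjective f) (hunit : ∀ r : S, IsUnit r ↔ f r ≠ 0)
    (A : Matrix (Fin 2) (Fin 2) S) (hcyc : Mat2Cyclic (A.map f)) :
    Nonempty ({p : S × S // IsUnit (p.1 • (1 : Matrix (Fin 2) (Fin 2) S) + p.2 • A).det} ≃
      {M : Matrix (Fin 2) (Fin 2) S | M * A = A * M ∧ IsUnit M.det}) := by
  classical
  obtain ⟨v, b, hb0, hb1⟩ := hcyc
  set vt : Fin 2 → S := fun i => surjInv hsurj (v i) with hvt
  have hfvt : ∀ i, f (vt i) = v i := fun i => surjInv_eq hsurj (v i)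
  set w : Fin 2 → Fin 2 → S := ![vt, A.mulVec vt] with hw
  set P : Matrix (Fin 2) (Fin 2) S := Matrix.of fun i j => w j i with hP
  have hPmapB : P.map f = Matrix.of (fun i j => b j i) := by
    ext i j
    fin_cases j
    · simp only [Matrix.map_apply, hP, hw, Matrix.of_apply, Fin.isValue]
      simp [hfvt, hb0]
    · simp only [Matrix.map_apply, hP, hw, Matrix.of_apply, Fin.isValue]
      simp [Matrix.mulVec, dotProduct, Fin.sum_univ_two, hb1, hfvt, Matrix.map_apply]
      fin_cases i <;> simp [hfvt]
  have hBunit : IsUnit ((Matrix.of (fun i j => b j i) : Matrix (Fin 2) (Fin 2) K)).det := by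
    have heq : (Pi.basisFun K (Fin 2)).toMatrix ⇑b = Matrix.of (fun i j => b j i) := by
      ext i j
      rw [Module.Basis.toMatrix_apply, Pi.basisFun_repr]
      rfl
    have hmul := Module.Basis.toMatrix_mul_toMatrix_flip (Pi.basisFun K (Fin 2)) b
    rw [heq] at hmul
    exact Matrix.isUnit_det_of_right_inverse hmul
  have hPdet : IsUnit P.det := by
    rw [hunit]
    rw [RingHom.map_det, RingHom.mapMatrix_apply, hPmapB]
    exact hBunit.ne_zero
  have hPmulVec : ∀ x y : S, P.mulVec ![x, y] = x • vt + y • A.mulVec vt := by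
    intro x y
    funext i
    simp only [Matrix.mulVec, dotProduct, Fin.sum_univ_two, hP, hw, Matrix.of_apply,
      Pi.add_apply, Pi.smul_apply, smul_eq_mul]
    simp only [Matrix.cons_val_zero, Matrix.cons_val_one, Matrix.head_cons,
      Matrix.mulVec, dotProduct, Fin.sum_univ_two]
    ring
  have hcancel : ∀ u u' : Fin 2 → S, P.mulVec u = P.mulVec u' → u = u' := by
    intro u u' h
    have h2 := congrArg (fun z => (P⁻¹).mulVec z) h
    simpa only [Matrix.mulVec_mulVec, Matrix.nonsing_inv_mul P hPdet, Matrix.one_mulVec] using h2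
  have hcomm : ∀ x y : S, (x • (1 : Matrix (Fin 2) (Fin 2) S) + y • A) * A
      = A * (x • (1 : Matrix (Fin 2) (Fin 2) S) + y • A) := by
    intro x y
    simp only [add_mul, mul_add, Matrix.smul_mul, Matrix.mul_smul, one_mul, mul_one]
  refine ⟨Equiv.ofBijective
    (fun p => ⟨p.1.1 • 1 + p.1.2 • A, hcomm p.1.1 p.1.2, p.2⟩) ⟨?_, ?_⟩⟩
  · intro p p' h
    have hM : p.1.1 • (1 : Matrix (Fin 2) (Fin 2) S) + p.1.2 • A
        = p'.1.1 • 1 + p'.1.2 • A := congrArg Subtype.val h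
    have h1 := congrArg (fun M => Matrix.mulVec M vt) hM
    simp only [Matrix.add_mulVec, Matrix.smul_mulVec, Matrix.one_mulVec] at h1
    have h2 : P.mulVec ![p.1.1, p.1.2] = P.mulVec ![p'.1.1, p'.1.2] := by
      rw [hPmulVec, hPmulVec, h1]
    have h3 := hcancel _ _ h2
    have e0 : p.1.1 = p'.1.1 := congrFun h3 0
    have e1 : p.1.2 = p'.1.2 := congrFun h3 1
    exact Subtype.ext (Prod.ext e0 e1)
  · rintro ⟨M, hMA, hMdet⟩
    set u := (P⁻¹).mulVec (M.mulVec vt) with hu_def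
    have hu : P.mulVec u = M.mulVec vt := by
      rw [hu_def, Matrix.mulVec_mulVec, Matrix.mul_nonsing_inv P hPdet, Matrix.one_mulVec]
    have hueq : ![u 0, u 1] = u := by
      funext i
      fin_cases i <;> rfl
    have h1 : u 0 • vt + u 1 • A.mulVec vt = M.mulVec vt := by
      rw [← hPmulVec, hueq, hu]
    set N := u 0 • (1 : Matrix (Fin 2) (Fin 2) S) + u 1 • A with hN
    have hNvt : N.mulVec vt = M.mulVec vt := by
      rw [hN]
      simp only [Matrix.add_mulVec, Matrix.smul_mulVec, Matrix.one_mulVec]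
      exact h1
    have hNAvt : N.mulVec (A.mulVec vt) = M.mulVec (A.mulVec vt) := by
      have l1 : M.mulVec (A.mulVec vt) = A.mulVec (M.mulVec vt) := by
        rw [Matrix.mulVec_mulVec, Matrix.mulVec_mulVec, hMA]
      rw [l1, ← hNvt, Matrix.mulVec_mulVec, Matrix.mulVec_mulVec, hcomm]
    have hNP : N * P = M * P := by
      have hBP : ∀ (B : Matrix (Fin 2) (Fin 2) S) i j, (B * P) i j = (B.mulVec (w j)) i := by
        intro B i j
        simp [Matrix.mul_apply, Matrix.mulVec, dotProduct, hP]
      ext i j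
      rw [hBP, hBP]
      fin_cases j
      · exact congrFun hNvt i
      · exact congrFun hNAvt i
    have hMN : N = M := by
      have h2 := congrArg (fun B => B * P⁻¹) hNP
      simpa [Matrix.mul_assoc, Matrix.mul_nonsing_inv P hPdet] using h2
    refine ⟨⟨(u 0, u 1), ?_⟩, ?_⟩
    · show IsUnit N.det
      rw [hMN]
      exact hMdet
    · exact Subtype.ext hMN

theorem isUnit_iff_factor {O : Type*} [CommRing O] [IsDomain O] [IsDiscreteValuationRing O]
    (π : O) (hπ : Irreducible π) (m : ℕ)
    (hle : Ideal.span {π ^ m} ≤ Ideal.span {π}) (r : O ⧸ Ideal.span {π ^ m}) :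
    IsUnit r ↔ Ideal.Quotient.factor hle r ≠ 0 := by
  have hnt : Nontrivial (O ⧸ Ideal.span {π}) :=
    Ideal.Quotient.nontrivial_iff.mpr (Ideal.span_singleton_ne_top hπ.not_isUnit)
  constructor
  · intro h
    exact (h.map (Ideal.Quotient.factor hle)).ne_zero
  · intro h
    obtain ⟨x, rfl⟩ := Ideal.Quotient.mk_surjective r
    rw [Ideal.Quotient.factor_mk, Ne, Ideal.Quotient.eq_zero_iff_mem] at h
    rw [← hπ.maximalIdeal_eq] at h
    exact (IsLocalRing.notMem_maximalIdeal.mp h).map (Ideal.Quotient.mk _)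

open Polynomial in
/-- for `A ∈ M₂(o_m)` with cyclic reduction `Ā` mod `π`, the cardinality of
the centralizer of `A` in `GL₂(o_m)` is `(q²−1)q^{2m−2}`, `(q−1)²q^{2m−2}`, or
`(q²−q)q^{2m−2}` according as `Ā` is irreducible, split semisimple, or split
non-semisimple. -/
theorem stmt_19 {O : Type*} [CommRing O] [IsDomain O] [IsDiscreteValuationRing O]
    (π : O) (hπ : Irreducible π)
    [Finite (O ⧸ Ideal.span {π})]
    (m : ℕ) (hm : 1 ≤ m)
    (hle : Ideal.span {π ^ m} ≤ Ideal.span {π})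
    (A : Matrix (Fin 2) (Fin 2) (O ⧸ Ideal.span {π ^ m}))
    (hcyc : Mat2Cyclic (A.map
      (⇑(Ideal.Quotient.factor hle)))) :
    (Irreducible (Matrix.charpoly (A.map
        (⇑(Ideal.Quotient.factor hle)))) →
      Nat.card {M : Matrix (Fin 2) (Fin 2) (O ⧸ Ideal.span {π ^ m}) |
          M * A = A * M ∧ IsUnit M.det} =
        (Nat.card (O ⧸ Ideal.span {π}) ^ 2 - 1) * Nat.card (O ⧸ Ideal.span {π}) ^ (2 * m - 2)) ∧
    ((∃ a b : O ⧸ Ideal.span {π}, a ≠ b ∧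
        Matrix.charpoly (A.map
          (⇑(Ideal.Quotient.factor hle))) =
          (X - C a) * (X - C b)) →
      Nat.card {M : Matrix (Fin 2) (Fin 2) (O ⧸ Ideal.span {π ^ m}) |
          M * A = A * M ∧ IsUnit M.det} =
        (Nat.card (O ⧸ Ideal.span {π}) - 1) ^ 2 * Nat.card (O ⧸ Ideal.span {π}) ^ (2 * m - 2)) ∧
    ((∃ a : O ⧸ Ideal.span {π},
        Matrix.charpoly (A.map
          (⇑(Ideal.Quotient.factor hle))) =
          (X - C a) ^ 2) →
      Nat.card {M : Matrix (Fin 2) (Fin 2) (O ⧸ Ideal.span {π ^ m}) |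
          M * A = A * M ∧ IsUnit M.det} =
        (Nat.card (O ⧸ Ideal.span {π}) ^ 2 - Nat.card (O ⧸ Ideal.span {π})) *
          Nat.card (O ⧸ Ideal.span {π}) ^ (2 * m - 2)) := by
  classical
  have hmax : (Ideal.span {π} : Ideal O).IsMaximal :=
    PrincipalIdealRing.isMaximal_of_irreducible hπ
  letI : Field (O ⧸ Ideal.span {π}) := Ideal.Quotient.field _
  set f := Ideal.Quotient.factor hle with hf
  have hsurjf : Function.Surjective f := by
    intro y
    obtain ⟨x, rfl⟩ := Ideal.Quotient.mk_surjective y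
    exact ⟨Ideal.Quotient.mk _ x, Ideal.Quotient.factor_mk hle x⟩
  set Mbar := A.map ⇑f with hMbar
  set t0 := Mbar 0 0 + Mbar 1 1 with ht0def
  set d0 := Mbar 0 0 * Mbar 1 1 - Mbar 0 1 * Mbar 1 0 with hd0def
  set T : Set ((O ⧸ Ideal.span {π}) × (O ⧸ Ideal.span {π})) :=
    {p | p.1 * p.1 + t0 * (p.1 * p.2) + d0 * (p.2 * p.2) ≠ 0} with hTdef
  have hmemT : ∀ p : (O ⧸ Ideal.span {π}) × (O ⧸ Ideal.span {π}),
      p ∈ T ↔ p.1 * p.1 + t0 * (p.1 * p.2) + d0 * (p.2 * p.2) ≠ 0 := fun p => Iff.rfl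
  have hq2 : 2 ≤ Nat.card (O ⧸ Ideal.span {π}) := Finite.one_lt_card
  have hχ : Mbar.charpoly = X ^ 2 - C t0 * X + C d0 := charpoly_fin_two' Mbar
  -- the common counting step
  have hcent : Nat.card {M : Matrix (Fin 2) (Fin 2) (O ⧸ Ideal.span {π ^ m}) |
      M * A = A * M ∧ IsUnit M.det}
      = Nat.card T * Nat.card (O ⧸ Ideal.span {π}) ^ (2 * m - 2) := by
    obtain ⟨e1⟩ := centralizer_equiv f hsurjf (isUnit_iff_factor π hπ m hle) A hcyc
    rw [← Nat.card_congr e1]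
    set g : ((O ⧸ Ideal.span {π ^ m}) × (O ⧸ Ideal.span {π ^ m})) →+
        ((O ⧸ Ideal.span {π}) × (O ⧸ Ideal.span {π})) :=
      AddMonoidHom.prodMap f.toAddMonoidHom f.toAddMonoidHom with hg_def
    have hg : ⇑g = Prod.map ⇑f ⇑f := rfl
    have hgsurj : Function.Surjective g := by
      rw [hg]
      exact Prod.map_surjective.mpr ⟨hsurjf, hsurjf⟩
    have hmapsmul : ∀ x y : O ⧸ Ideal.span {π ^ m},
        ((x • (1 : Matrix (Fin 2) (Fin 2) (O ⧸ Ideal.span {π ^ m})) + y • A).map ⇑f)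
          = f x • 1 + f y • Mbar := by
      intro x y
      ext i j
      simp only [Matrix.map_apply, Matrix.add_apply, Matrix.smul_apply, Matrix.one_apply,
        smul_eq_mul, map_add, map_mul, mul_ite, mul_one, mul_zero, apply_ite ⇑f, map_one,
        map_zero, hMbar]
    have hcond : ∀ p : (O ⧸ Ideal.span {π ^ m}) × (O ⧸ Ideal.span {π ^ m}),
        IsUnit ((p.1 • (1 : Matrix (Fin 2) (Fin 2) (O ⧸ Ideal.span {π ^ m})) + p.2 • A).det)
          ↔ p ∈ ⇑g ⁻¹' T := by
      intro p
      rw [isUnit_iff_factor π hπ m hle, RingHom.map_det, RingHom.mapMatrix_apply, hmapsmul,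
        det_smul_one_add_smul]
      rw [Set.mem_preimage, hg]
      exact Iff.rfl
    rw [Nat.card_congr (Equiv.subtypeEquivRight hcond), card_preimage g hgsurj T]
    congr 1
    have hker : (⇑g ⁻¹' ({0} : Set _) : Set _) = (⇑f ⁻¹' {0}) ×ˢ (⇑f ⁻¹' {0}) := by
      ext p
      simp [hg, Prod.ext_iff]
    rw [hker, Nat.card_congr (Equiv.Set.prod _ _), Nat.card_prod]
    have hkerf : Nat.card (⇑f ⁻¹' ({0} : Set _) : Set _)
        = Nat.card (O ⧸ Ideal.span {π}) ^ (m - 1) := by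
      obtain ⟨e2⟩ := kerEquiv π (π ^ (m - 1)) hπ.ne_zero (Ideal.span {π ^ m})
        (Ideal.span {π}) (by rw [← pow_succ', Nat.sub_add_cancel hm]) rfl hle
      rw [hf, ← Nat.card_congr e2, quot_card π hπ]
    rw [hkerf, ← pow_add]
    congr 1
    omega
  refine ⟨?_, ?_, ?_⟩
  · -- irreducible case
    intro hirr
    rw [hcent]
    congr 1
    have hnd : Mbar.charpoly.natDegree = 2 := by
      rw [Matrix.charpoly_natDegree_eq_dim]
      simp
    have hroot := no_root_of_irred Mbar.charpoly hnd hirr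
    have hcompl : Tᶜ = {((0 : O ⧸ Ideal.span {π}), (0 : O ⧸ Ideal.span {π}))} := by
      ext p
      simp only [Set.mem_compl_iff, hmemT, not_not, Set.mem_singleton_iff, Prod.ext_iff]
      constructor
      · intro hD
        by_cases hb : p.2 = 0
        · rw [hb] at hD
          simp only [mul_zero, zero_mul, add_zero] at hD
          exact ⟨mul_self_eq_zero.mp hD, hb⟩
        · exfalso
          set r := -(p.1 * p.2⁻¹) with hr
          have ha : p.1 = -(r * p.2) := by
            rw [hr]
            field_simp
          have hzero : (p.2 * p.2) * (r * r - t0 * r + d0) = 0 := by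
            rw [ha] at hD
            linear_combination hD
          have h2 : r * r - t0 * r + d0 = 0 := by
            rcases mul_eq_zero.mp hzero with h | h
            · exact absurd (mul_self_eq_zero.mp h) hb
            · exact h
          apply hroot r
          show Mbar.charpoly.eval r = 0
          rw [hχ]
          simp only [eval_add, eval_sub, eval_pow, eval_mul, eval_X, eval_C]
          linear_combination h2
      · rintro ⟨h1, h2⟩
        rw [h1, h2]
        ring
    have hcc := Set.ncard_add_ncard_compl T
    rw [hcompl, Set.ncard_singleton, Nat.card_prod] at hcc
    rw [Nat.card_coe_set_eq]
    have := arith_case (Nat.card (O ⧸ Ideal.span {π})) T.ncard 1 hq2 hcc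
    rw [this, pow_two]
  · -- split semisimple case
    rintro ⟨a, b, hab, hfac⟩
    rw [hcent]
    congr 1
    have hexp : (X - C a) * (X - C b) = X ^ 2 - C (a + b) * X + C (a * b) := by
      rw [C_add, C_mul]
      ring
    have heq2 : X ^ 2 - C t0 * X + C d0 = X ^ 2 - C (a + b) * X + C (a * b) := by
      rw [← hχ, hfac, hexp]
    have ht0 : t0 = a + b := by
      have h1 := congrArg (fun p => Polynomial.coeff p 1) heq2
      simp at h1
      linear_combination -h1
    have hd0 : d0 = a * b := by
      have h1 := congrArg (fun p => Polynomial.coeff p 0) heq2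
      simpa using h1
    have hcompl : Tᶜ = {p : (O ⧸ Ideal.span {π}) × (O ⧸ Ideal.span {π}) | p.1 + a * p.2 = 0}
        ∪ {p | p.1 + b * p.2 = 0} := by
      ext p
      simp only [Set.mem_compl_iff, hmemT, not_not, Set.mem_union, Set.mem_setOf_eq]
      rw [show p.1 * p.1 + t0 * (p.1 * p.2) + d0 * (p.2 * p.2)
        = (p.1 + a * p.2) * (p.1 + b * p.2) by rw [ht0, hd0]; ring, mul_eq_zero]
    have hinter : ({p : (O ⧸ Ideal.span {π}) × (O ⧸ Ideal.span {π}) | p.1 + a * p.2 = 0}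
        ∩ {p | p.1 + b * p.2 = 0}) = {(0, 0)} := by
      ext p
      simp only [Set.mem_inter_iff, Set.mem_setOf_eq, Set.mem_singleton_iff, Prod.ext_iff]
      constructor
      · rintro ⟨h1, h2⟩
        have hy : (a - b) * p.2 = 0 := by linear_combination h1 - h2
        have hy2 : p.2 = 0 := by
          rcases mul_eq_zero.mp hy with h | h
          · exact absurd (sub_eq_zero.mp h) hab
          · exact h
        refine ⟨?_, hy2⟩
        rw [hy2, mul_zero, add_zero] at h1
        exact h1
      · rintro ⟨h1, h2⟩
        rw [h1, h2]
        constructor <;> ring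
    have hla : ({p : (O ⧸ Ideal.span {π}) × (O ⧸ Ideal.span {π}) | p.1 + a * p.2 = 0}).ncard
        = Nat.card (O ⧸ Ideal.span {π}) := by
      rw [← Nat.card_coe_set_eq]
      exact card_line a
    have hlb : ({p : (O ⧸ Ideal.span {π}) × (O ⧸ Ideal.span {π}) | p.1 + b * p.2 = 0}).ncard
        = Nat.card (O ⧸ Ideal.span {π}) := by
      rw [← Nat.card_coe_set_eq]
      exact card_line b
    have hu := Set.ncard_union_add_ncard_inter
      ({p : (O ⧸ Ideal.span {π}) × (O ⧸ Ideal.span {π}) | p.1 + a * p.2 = 0})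
      ({p | p.1 + b * p.2 = 0})
    rw [hinter, Set.ncard_singleton, hla, hlb] at hu
    have hcc := Set.ncard_add_ncard_compl T
    rw [hcompl, Nat.card_prod] at hcc
    rw [Nat.card_coe_set_eq]
    generalize hqe : Nat.card (O ⧸ Ideal.span {π}) = q at hq2 hu hcc ⊢
    obtain ⟨q1, rfl⟩ : ∃ q1, q1 + 1 = q := ⟨q - 1, by omega⟩
    have hprod : (q1 + 1) * (q1 + 1) = q1 * q1 + 2 * q1 + 1 := by ring
    rw [hprod] at hcc
    have e2 : (q1 + 1 - 1) ^ 2 = q1 * q1 := by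
      simp [pow_two]
    rw [e2]
    omega
  · -- split non-semisimple case
    rintro ⟨a, hfac⟩
    rw [hcent]
    congr 1
    have hexp : (X - C a) ^ 2 = X ^ 2 - C (a + a) * X + C (a * a) := by
      rw [C_add, C_mul]
      ring
    have heq2 : X ^ 2 - C t0 * X + C d0 = X ^ 2 - C (a + a) * X + C (a * a) := by
      rw [← hχ, hfac, hexp]
    have ht0 : t0 = a + a := by
      have h1 := congrArg (fun p => Polynomial.coeff p 1) heq2
      simp at h1
      linear_combination -h1
    have hd0 : d0 = a * a := by
      have h1 := congrArg (fun p => Polynomial.coeff p 0) heq2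
      simpa using h1
    have hcompl : Tᶜ
        = {p : (O ⧸ Ideal.span {π}) × (O ⧸ Ideal.span {π}) | p.1 + a * p.2 = 0} := by
      ext p
      simp only [Set.mem_compl_iff, hmemT, not_not, Set.mem_setOf_eq]
      rw [show p.1 * p.1 + t0 * (p.1 * p.2) + d0 * (p.2 * p.2)
        = (p.1 + a * p.2) * (p.1 + a * p.2) by rw [ht0, hd0]; ring, mul_self_eq_zero]
    have hla : ({p : (O ⧸ Ideal.span {π}) × (O ⧸ Ideal.span {π}) | p.1 + a * p.2 = 0}).ncard
        = Nat.card (O ⧸ Ideal.span {π}) := by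
      rw [← Nat.card_coe_set_eq]
      exact card_line a
    have hcc := Set.ncard_add_ncard_compl T
    rw [hcompl, hla, Nat.card_prod] at hcc
    rw [Nat.card_coe_set_eq, pow_two]
    generalize hqe : Nat.card (O ⧸ Ideal.span {π}) = q at hq2 hcc ⊢
    omega
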